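/- For integers p, q with |p| > 1 and |q| > 1, the group ⟨x, y | xᵖ = yᵠ⟩ is not bi-orderable. -/

import Mathlib

/-- The torus-knot-type group ⟨x, y | xᵖ = yᵠ⟩, with x ↦ true, y ↦ false. -/
def TorusRels (p q : ℤ) : Set (FreeGroup Bool) :=
  {FreeGroup.of true ^ p * (FreeGroup.of false ^ q)⁻¹}

/-! ### Auxiliary permutations -/

lemma finRotate_pow_self (n : ℕ) : (finRotate (n + 1)) ^ (n + 1) = 1 := by
  have h : finRotate (n + 1) = Equiv.addRight (1 : Fin (n + 1)) := by
    ext i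
    simp [Equiv.addRight]
  open Fin.NatCast in
  have hpow : ∀ k : ℕ, (Equiv.addRight (1 : Fin (n + 1))) ^ k = Equiv.addRight ((k : Fin (n + 1))) := by
    intro k
    induction k with
    | zero => ext i; simp
    | succ k ih => rw [pow_succ, ih]; ext i; simp [add_assoc, add_comm (1 : Fin (n + 1))]
  open Fin.NatCast in
  rw [h, hpow, Fin.natCast_self]
  ext i
  simp [Equiv.addRight]

/-- The row `{(i, 0)}` of `Fin (n+2) × Fin (m+2)`. -/
def rowEquiv (n m : ℕ) : Fin (n + 2) ≃ {x : Fin (n + 2) × Fin (m + 2) // x.2 = 0} where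
  toFun i := ⟨(i, 0), rfl⟩
  invFun s := s.1.1
  left_inv i := rfl
  right_inv s := by
    apply Subtype.ext
    have h2 := s.2
    ext
    · rfl
    · exact congrArg Fin.val h2.symm

/-- The column `{(0, j)}` of `Fin (n+2) × Fin (m+2)`. -/
def colEquiv (n m : ℕ) : Fin (m + 2) ≃ {x : Fin (n + 2) × Fin (m + 2) // x.1 = 0} where
  toFun j := ⟨(0, j), rfl⟩
  invFun s := s.1.2
  left_inv j := rfl
  right_inv s := by
    apply Subtype.ext
    have h1 := s.2
    ext
    · exact congrArg Fin.val h1.symm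
    · rfl

def aPerm (n m : ℕ) : Equiv.Perm (Fin (n + 2) × Fin (m + 2)) :=
  (finRotate (n + 2)).extendDomain (rowEquiv n m)

def bPerm (n m : ℕ) : Equiv.Perm (Fin (n + 2) × Fin (m + 2)) :=
  (finRotate (m + 2)).extendDomain (colEquiv n m)

lemma aPerm_pow (n m : ℕ) : aPerm n m ^ (n + 2) = 1 := by
  rw [aPerm, ← Equiv.Perm.extendDomain_pow, finRotate_pow_self, Equiv.Perm.extendDomain_one]

lemma bPerm_pow (n m : ℕ) : bPerm n m ^ (m + 2) = 1 := by
  rw [bPerm, ← Equiv.Perm.extendDomain_pow, finRotate_pow_self, Equiv.Perm.extendDomain_one]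

lemma aPerm_bPerm_ne (n m : ℕ) : aPerm n m * bPerm n m ≠ bPerm n m * aPerm n m := by
  intro h
  have h00 := Equiv.ext_iff.mp h ((0 : Fin (n + 2)), (0 : Fin (m + 2)))
  -- compute both sides at (0,0)
  have hb00 : bPerm n m (0, 0) = (0, 1) := by
    have h := Equiv.Perm.extendDomain_apply_image (finRotate (m + 2)) (colEquiv n m) 0
    rw [finRotate_apply_zero] at h
    exact h
  have ha00 : aPerm n m (0, 0) = (1, 0) := by
    have h := Equiv.Perm.extendDomain_apply_image (finRotate (n + 2)) (rowEquiv n m) 0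
    rw [finRotate_apply_zero] at h
    exact h
  have ha01 : aPerm n m (0, 1) = (0, 1) := by
    apply Equiv.Perm.extendDomain_apply_not_subtype
    intro hcon
    have : (1 : Fin (m + 2)) = 0 := hcon
    exact one_ne_zero this
  have hb10 : bPerm n m (1, 0) = (1, 0) := by
    apply Equiv.Perm.extendDomain_apply_not_subtype
    intro hcon
    have : (1 : Fin (n + 2)) = 0 := hcon
    exact one_ne_zero this
  simp only [Equiv.Perm.mul_apply] at h00
  rw [hb00, ha01, ha00, hb10] at h00
  have : (0 : Fin (n + 2)) = 1 := congrArg Prod.fst h00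
  exact one_ne_zero this.symm

lemma pow_int_eq_one {G : Type*} [Group G] {a : G} {N : ℕ} {k : ℤ}
    (h : a ^ N = 1) (hdvd : (N : ℤ) ∣ k) : a ^ k = 1 := by
  obtain ⟨c, rfl⟩ := hdvd
  rw [zpow_mul, zpow_natCast, h, one_zpow]

theorem torus_group_not_biorderable (p q : ℤ) (hp : 1 < |p|) (hq : 1 < |q|) :
    ¬ ∃ r : PresentedGroup (TorusRels p q) → PresentedGroup (TorusRels p q) → Prop,
      IsStrictTotalOrder (PresentedGroup (TorusRels p q)) r ∧
      ∀ a b c : PresentedGroup (TorusRels p q),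
        r b c → r (a * b) (a * c) ∧ r (b * a) (c * a) := by
  rintro ⟨r, hsto, hinv⟩
  haveI := hsto
  set X : PresentedGroup (TorusRels p q) := PresentedGroup.of true with hX
  set Y : PresentedGroup (TorusRels p q) := PresentedGroup.of false with hY
  -- natAbs bounds
  have hpabs : 2 ≤ p.natAbs := by
    have := hp
    rw [Int.abs_eq_natAbs] at this
    exact_mod_cast this
  have hqabs : 2 ≤ q.natAbs := by
    have := hq
    rw [Int.abs_eq_natAbs] at this
    exact_mod_cast this
  obtain ⟨n', hn'⟩ : ∃ n', p.natAbs = n' + 2 := ⟨p.natAbs - 2, by omega⟩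
  obtain ⟨m', hm'⟩ : ∃ m', q.natAbs = m' + 2 := ⟨q.natAbs - 2, by omega⟩
  -- the relation in G
  have hrel : X ^ p = Y ^ q := by
    have hmem : (FreeGroup.of true ^ p * (FreeGroup.of false ^ q)⁻¹) ∈
        Subgroup.normalClosure (TorusRels p q) :=
      Subgroup.subset_normalClosure rfl
    have h1 : PresentedGroup.mk (TorusRels p q)
        (FreeGroup.of true ^ p * (FreeGroup.of false ^ q)⁻¹) = 1 :=
      (QuotientGroup.eq_one_iff _).mpr hmem
    rw [map_mul, map_inv, map_zpow, map_zpow] at h1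
    have : X ^ p * (Y ^ q)⁻¹ = 1 := h1
    rw [mul_inv_eq_one] at this
    exact this
  -- X and Y do not commute: map to permutations
  have hNC : ¬ Commute X Y := by
    intro hcomm
    set f0 : Bool → Equiv.Perm (Fin (n' + 2) × Fin (m' + 2)) :=
      fun b => if b then aPerm n' m' else bPerm n' m' with hf0
    have hrels : ∀ w ∈ TorusRels p q, FreeGroup.lift f0 w = 1 := by
      rintro w rfl
      rw [map_mul, map_inv, map_zpow, map_zpow, FreeGroup.lift_apply_of, FreeGroup.lift_apply_of]
      have ha : (f0 true) ^ p = 1 := by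
        apply pow_int_eq_one (N := n' + 2)
        · simp [hf0]
          exact aPerm_pow n' m'
        · rw [← hn']
          exact Int.natAbs_dvd.mpr dvd_rfl
      have hb : (f0 false) ^ q = 1 := by
        apply pow_int_eq_one (N := m' + 2)
        · simp [hf0]
          exact bPerm_pow n' m'
        · rw [← hm']
          exact Int.natAbs_dvd.mpr dvd_rfl
      rw [ha, hb]
      simp
    set f : PresentedGroup (TorusRels p q) →* Equiv.Perm (Fin (n' + 2) × Fin (m' + 2)) := PresentedGroup.toGroup hrels with hf
    have hfX : f X = aPerm n' m' := by
      rw [hX, hf, PresentedGroup.toGroup.of]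
      simp [hf0]
    have hfY : f Y = bPerm n' m' := by
      rw [hY, hf, PresentedGroup.toGroup.of]
      simp [hf0]
    have : aPerm n' m' * bPerm n' m' = bPerm n' m' * aPerm n' m' := by
      rw [← hfX, ← hfY, ← map_mul, ← map_mul, hcomm.eq]
    exact aPerm_bPerm_ne n' m' this
  -- choose u with u ^ p.natAbs = X ^ p and ¬ Commute u Y
  obtain ⟨u, hu, hc⟩ : ∃ u : PresentedGroup (TorusRels p q), u ^ p.natAbs = X ^ p ∧ ¬ Commute u Y := by
    rcases le_or_gt 0 p with hsgn | hsgn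
    · refine ⟨X, ?_, hNC⟩
      rw [← zpow_natCast, Int.natAbs_of_nonneg hsgn]
    · refine ⟨X⁻¹, ?_, fun h => hNC (Commute.inv_left_iff.mp h)⟩
      rw [← zpow_natCast, inv_zpow, ← zpow_neg]
      congr 1
      omega
  -- u ^ N commutes with Y
  set N : ℕ := p.natAbs with hNdef
  have hcommN : Commute (u ^ N) Y := by
    rw [hu, hrel]
    exact (Commute.refl Y).zpow_left q
  -- positivity machinery
  have pos_mul : ∀ {a b : PresentedGroup (TorusRels p q)}, r 1 a → r 1 b → r 1 (a * b) := by
    intro a b ha hb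
    have h1 : r (a * 1) (a * b) := (hinv a 1 b hb).1
    rw [mul_one] at h1
    exact trans_of r ha h1
  have pos_conj : ∀ {a : PresentedGroup (TorusRels p q)} (g : PresentedGroup (TorusRels p q)), r 1 a → r 1 (g * a * g⁻¹) := by
    intro a g ha
    have h1 : r (g * 1) (g * a) := (hinv g 1 a ha).1
    rw [mul_one] at h1
    have h2 : r (g * g⁻¹) (g * a * g⁻¹) := (hinv g⁻¹ g (g * a) h1).2
    rwa [mul_inv_cancel] at h2
  -- the commutator and his products of conjugates
  set c : PresentedGroup (TorusRels p q) := u * Y * u⁻¹ * Y⁻¹ with hcdef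
  set W : ℕ → PresentedGroup (TorusRels p q) := fun k => u ^ k * Y * (u ^ k)⁻¹ * Y⁻¹ with hW
  have step : ∀ k : ℕ, W (k + 1) = (u ^ k * c * (u ^ k)⁻¹) * W k := by
    intro k
    simp only [hW, hcdef]
    group
  have posW : r 1 c → ∀ k : ℕ, r 1 (W (k + 1)) := by
    intro hc0 k
    induction k with
    | zero =>
      have h1 : W 1 = c := by
        simp only [hW, hcdef, pow_one]
      rw [h1]; exact hc0
    | succ k ih =>
      rw [step (k + 1)]
      exact pos_mul (pos_conj (u ^ (k + 1)) hc0) ih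
  have negW : r 1 c⁻¹ → ∀ k : ℕ, r 1 ((W (k + 1))⁻¹) := by
    intro hc0 k
    have step' : ∀ j : ℕ, (W (j + 1))⁻¹ = (W j)⁻¹ * (u ^ j * c⁻¹ * (u ^ j)⁻¹) := by
      intro j
      rw [step j]
      group
    induction k with
    | zero =>
      have h1 : W 1 = c := by
        simp only [hW, hcdef, pow_one]
      rw [h1]; exact hc0
    | succ k ih =>
      rw [step' (k + 1)]
      exact pos_mul ih (pos_conj (u ^ (k + 1)) hc0)
  -- W N = 1
  have hWN : W N = 1 := by
    simp only [hW]
    rw [hcommN.eq]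
    group
  have hNpos : ∃ k, N = k + 1 := ⟨N - 1, by omega⟩
  obtain ⟨k0, hk0⟩ := hNpos
  -- c ≠ 1
  have hcne : c ≠ 1 := by
    intro h
    apply hc
    have : u * Y * u⁻¹ * Y⁻¹ = 1 := h
    rw [mul_inv_eq_one, mul_inv_eq_iff_eq_mul] at this
    exact this
  -- trichotomy gives contradiction
  rcases trichotomous_of r (1 : PresentedGroup (TorusRels p q)) c with hpos | heq | hneg
  · have := posW hpos k0
    rw [← hk0, hWN] at this
    exact irrefl_of r 1 this
  · exact hcne heq.symm
  · have hPcinv : r 1 c⁻¹ := by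
      have h1 : r (c⁻¹ * c) (c⁻¹ * 1) := (hinv c⁻¹ c 1 hneg).1
      rwa [inv_mul_cancel, mul_one] at h1
    have := negW hPcinv k0
    rw [← hk0, hWN] at this
    rw [inv_one] at this
    exact irrefl_of r 1 this
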